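/- There exists a strictly increasing sequence α with α_n > 1 for all n and α_n → ∞ such that Σ_{n=1}^∞ e^{α_n}/n^t = ∞ for every t ∈ ℝ (i.e. S_1(α) = ∅), and yet (log n)/α_n does not tend to 0 as n → ∞ (so Λ₀(α) is not nuclear). -/

import Mathlib

open Filter Topology

noncomputable section

/-- triple iterated base-2 logarithm. -/
private def Kf (n : ℕ) : ℕ := Nat.log 2 (Nat.log 2 (Nat.log 2 n))

/-- the sequence: `log(n+2) + 2 + 2^(2^(Kf n + 1))`. -/
private def aa (n : ℕ) : ℝ := Real.log ((n : ℝ) + 2) + 2 + (2 : ℝ) ^ (2 ^ (Kf n + 1))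

private lemma Kf_mono : Monotone Kf := fun _ _ h =>
  Nat.log_mono_right (Nat.log_mono_right (Nat.log_mono_right h))

private lemma hpow_pos (n : ℕ) : (0:ℝ) < (2 : ℝ) ^ (2 ^ (Kf n + 1)) := by positivity

private lemma log_nonneg' (n : ℕ) : 0 ≤ Real.log ((n : ℝ) + 2) := by
  apply Real.log_nonneg; linarith [Nat.cast_nonneg (α := ℝ) n]

private lemma aa_strictMono : StrictMono aa := by
  intro m n hmn
  have h1 : Real.log ((m : ℝ) + 2) < Real.log ((n : ℝ) + 2) := by
    apply Real.log_lt_log (by positivity)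
    have : (m:ℝ) < n := by exact_mod_cast hmn
    linarith
  have h2 : (2 : ℝ) ^ (2 ^ (Kf m + 1)) ≤ (2 : ℝ) ^ (2 ^ (Kf n + 1)) := by
    apply pow_le_pow_right₀ one_le_two
    exact Nat.pow_le_pow_right (by norm_num) (by have := Kf_mono hmn.le; omega)
  unfold aa; linarith

private lemma aa_gt_one (n : ℕ) : 1 < aa n := by
  have := hpow_pos n; have := log_nonneg' n; unfold aa; linarith

private lemma log2_pred_pow (L : ℕ) (hL : 1 ≤ L) : Nat.log 2 (2 ^ L - 1) = L - 1 := by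
  apply Nat.log_eq_of_pow_le_of_lt_pow
  · have h2 : 2 ^ (L - 1) * 2 = 2 ^ L := by
      rw [← pow_succ]; congr 1; omega
    have h1 : 1 ≤ 2 ^ (L - 1) := Nat.one_le_two_pow
    omega
  · have hE : L - 1 + 1 = L := by omega
    rw [hE]
    have h1 : 1 ≤ 2 ^ L := Nat.one_le_two_pow
    omega

private lemma Kf_A (k : ℕ) : Kf (2 ^ 2 ^ 2 ^ k) = k := by
  unfold Kf
  rw [Nat.log_pow one_lt_two, Nat.log_pow one_lt_two, Nat.log_pow one_lt_two]

private lemma Kf_B (k : ℕ) : Kf (2 ^ 2 ^ 2 ^ (k + 1) - 1) = k := by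
  have hM : 1 ≤ 2 ^ (k + 1) := Nat.one_le_two_pow
  have hL : 1 ≤ 2 ^ 2 ^ (k + 1) := Nat.one_le_two_pow
  unfold Kf
  rw [log2_pred_pow _ hL, log2_pred_pow _ hM]
  apply Nat.log_eq_of_pow_le_of_lt_pow
  · have : 2 ^ k * 2 = 2 ^ (k + 1) := by rw [← pow_succ]
    have h1 : 1 ≤ 2 ^ k := Nat.one_le_two_pow
    omega
  · have h1 : 1 ≤ 2 ^ (k + 1) := Nat.one_le_two_pow
    omega

private lemma log_two_le_one : Real.log 2 ≤ 1 := by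
  have := Real.log_le_sub_one_of_pos (by norm_num : (0:ℝ) < 2); linarith

/-- key bound: for every `t`, eventually in `k` the term at `n = 2^2^2^k` is ≥ 1. -/
private lemma key_div (t : ℝ) :
    ∀ᶠ k in atTop, t * Real.log ((2 ^ 2 ^ 2 ^ k : ℕ) + 1 : ℝ) ≤ aa (2 ^ 2 ^ 2 ^ k) := by
  obtain ⟨K0, hK0⟩ := exists_nat_ge (2 * |t|)
  filter_upwards [eventually_ge_atTop K0] with k hk
  have hL1 : (1:ℕ) ≤ 2 ^ 2 ^ k := Nat.one_le_two_pow
  have hKL : (2 * |t| : ℝ) ≤ ((2 ^ 2 ^ k : ℕ) : ℝ) := by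
    calc (2 * |t| : ℝ) ≤ K0 := hK0
    _ ≤ k := by exact_mod_cast hk
    _ ≤ ((2 ^ k : ℕ) : ℝ) := by exact_mod_cast (Nat.lt_two_pow_self (n := k)).le
    _ ≤ ((2 ^ 2 ^ k : ℕ) : ℝ) := by exact_mod_cast (Nat.lt_two_pow_self (n := 2 ^ k)).le
  have hA1 : (2 ^ 2 ^ 2 ^ k : ℕ) + 1 ≤ 2 ^ (2 ^ 2 ^ k + 1) := by
    have h2 : (2:ℕ) ^ (2 ^ 2 ^ k) * 2 = 2 ^ (2 ^ 2 ^ k + 1) := by rw [← pow_succ]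
    have h1 : 1 ≤ (2:ℕ) ^ (2 ^ 2 ^ k) := Nat.one_le_two_pow
    omega
  have hLcast : (1:ℝ) ≤ ((2 ^ 2 ^ k : ℕ) : ℝ) := by exact_mod_cast hL1
  have hlog : Real.log ((2 ^ 2 ^ 2 ^ k : ℕ) + 1 : ℝ) ≤ 2 * ((2 ^ 2 ^ k : ℕ) : ℝ) := by
    calc Real.log ((2 ^ 2 ^ 2 ^ k : ℕ) + 1 : ℝ)
        ≤ Real.log ((2 : ℝ) ^ (2 ^ 2 ^ k + 1)) := by
          apply Real.log_le_log (by positivity)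
          exact_mod_cast hA1
    _ = (((2 ^ 2 ^ k : ℕ) : ℝ) + 1) * Real.log 2 := by
          rw [Real.log_pow]; push_cast; ring
    _ ≤ ((2 ^ 2 ^ k : ℕ) : ℝ) + 1 := by
        nlinarith [log_two_le_one, Real.log_nonneg (by norm_num : (1:ℝ) ≤ 2)]
    _ ≤ 2 * ((2 ^ 2 ^ k : ℕ) : ℝ) := by linarith
  have hlognn : 0 ≤ Real.log ((2 ^ 2 ^ 2 ^ k : ℕ) + 1 : ℝ) := by
    apply Real.log_nonneg
    have : (1:ℝ) ≤ ((2 ^ 2 ^ 2 ^ k : ℕ) : ℝ) := by exact_mod_cast Nat.one_le_two_pow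
    linarith
  have haa : ((2 ^ 2 ^ k : ℕ) : ℝ) * ((2 ^ 2 ^ k : ℕ) : ℝ) ≤ aa (2 ^ 2 ^ 2 ^ k) := by
    have hsq : ((2 ^ 2 ^ k : ℕ) : ℝ) * ((2 ^ 2 ^ k : ℕ) : ℝ) = (2 : ℝ) ^ (2 ^ (k + 1)) := by
      have h : (2:ℕ) ^ (k+1) = 2 ^ k * 2 := by rw [pow_succ]
      rw [h, pow_mul]
      push_cast
      ring
    rw [hsq]
    unfold aa
    rw [Kf_A k]
    have := log_nonneg' (2 ^ 2 ^ 2 ^ k)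
    linarith
  calc t * Real.log ((2 ^ 2 ^ 2 ^ k : ℕ) + 1 : ℝ)
      ≤ |t| * Real.log ((2 ^ 2 ^ 2 ^ k : ℕ) + 1 : ℝ) :=
        mul_le_mul_of_nonneg_right (le_abs_self t) hlognn
    _ ≤ |t| * (2 * ((2 ^ 2 ^ k : ℕ) : ℝ)) := mul_le_mul_of_nonneg_left hlog (abs_nonneg t)
    _ = (2 * |t|) * ((2 ^ 2 ^ k : ℕ) : ℝ) := by ring
    _ ≤ ((2 ^ 2 ^ k : ℕ) : ℝ) * ((2 ^ 2 ^ k : ℕ) : ℝ) :=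
        mul_le_mul_of_nonneg_right hKL (by positivity)
    _ ≤ aa (2 ^ 2 ^ 2 ^ k) := haa

theorem stmt13 :
    ∃ a : ℕ → ℝ, StrictMono a ∧ (∀ n, 1 < a n) ∧ Tendsto a atTop atTop ∧
      (∀ t : ℝ, ¬ Summable fun n : ℕ => Real.exp (a n) / ((n : ℝ) + 1) ^ t) ∧
      ¬ Tendsto (fun n : ℕ => Real.log ((n : ℝ) + 1) / a n) atTop (𝓝 0) := by
  refine ⟨aa, aa_strictMono, aa_gt_one, ?_, ?_, ?_⟩
  · -- tendsto atTop
    have hlog : Tendsto (fun n : ℕ => Real.log ((n : ℝ) + 2)) atTop atTop := by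
      apply Real.tendsto_log_atTop.comp
      apply tendsto_atTop_add_const_right
      exact tendsto_natCast_atTop_atTop
    refine tendsto_atTop_mono (fun n => ?_) hlog
    have := hpow_pos n; unfold aa; linarith
  · -- not summable
    intro t hs
    have h0 := hs.tendsto_atTop_zero
    have hev : ∀ᶠ n in atTop, Real.exp (aa n) / ((n : ℝ) + 1) ^ t < 1 :=
      h0.eventually_lt_const one_pos
    have hfreq : ∃ᶠ n in atTop, (1:ℝ) ≤ Real.exp (aa n) / ((n : ℝ) + 1) ^ t := by
      have hmono : StrictMono (fun k : ℕ => 2 ^ 2 ^ 2 ^ k) := by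
        intro i j hij
        exact Nat.pow_lt_pow_right one_lt_two
          (Nat.pow_lt_pow_right one_lt_two (Nat.pow_lt_pow_right one_lt_two hij))
      apply hmono.tendsto_atTop.frequently
      apply (key_div t).frequently.mono
      intro k hk
      have hpos : (0:ℝ) < ((2 ^ 2 ^ 2 ^ k : ℕ) : ℝ) + 1 := by positivity
      rw [Real.rpow_def_of_pos hpos, le_div_iff₀ (Real.exp_pos _), one_mul,
        Real.exp_le_exp]
      calc Real.log (((2 ^ 2 ^ 2 ^ k : ℕ) : ℝ) + 1) * t
          = t * Real.log (((2 ^ 2 ^ 2 ^ k : ℕ) : ℝ) + 1) := by ring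
        _ ≤ aa (2 ^ 2 ^ 2 ^ k) := by exact_mod_cast hk
    obtain ⟨n, h1, h2⟩ := (hfreq.and_eventually hev).exists
    linarith
  · -- log(n+1)/aa n does not tend to 0
    intro htend
    have hev : ∀ᶠ n : ℕ in atTop, Real.log ((n : ℝ) + 1) / aa n < 1/10 :=
      htend.eventually_lt_const (by norm_num : (0:ℝ) < 1/10)
    have hfreq : ∃ᶠ n : ℕ in atTop, (1/10 : ℝ) ≤ Real.log ((n : ℝ) + 1) / aa n := by
      have hmono : StrictMono (fun k : ℕ => 2 ^ 2 ^ 2 ^ (k + 1) - 1) := by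
        intro i j hij
        have h1 : (2:ℕ) ^ 2 ^ 2 ^ (i+1) < 2 ^ 2 ^ 2 ^ (j+1) :=
          Nat.pow_lt_pow_right one_lt_two
            (Nat.pow_lt_pow_right one_lt_two (Nat.pow_lt_pow_right one_lt_two (by omega)))
        have h2 : 1 ≤ (2:ℕ) ^ 2 ^ 2 ^ (i+1) := Nat.one_le_two_pow
        show 2 ^ 2 ^ 2 ^ (i+1) - 1 < 2 ^ 2 ^ 2 ^ (j+1) - 1
        omega
      apply hmono.tendsto_atTop.frequently
      apply Frequently.of_forall
      intro k
      have hN1 : 1 ≤ (2:ℕ) ^ 2 ^ 2 ^ (k+1) := Nat.one_le_two_pow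
      have hsub : (2:ℕ) ^ 2 ^ 2 ^ (k+1) - 1 + 1 = 2 ^ 2 ^ 2 ^ (k+1) := by omega
      have hcast1 : ((2 ^ 2 ^ 2 ^ (k+1) - 1 : ℕ) : ℝ) + 1
          = (2:ℝ) ^ (2 ^ 2 ^ (k+1) : ℕ) := by
        have : ((2 ^ 2 ^ 2 ^ (k+1) - 1 : ℕ) : ℝ) + 1 = ((2 ^ 2 ^ 2 ^ (k+1) : ℕ) : ℝ) := by
          exact_mod_cast hsub
        rw [this]; push_cast; ring
      have hh1 : (1:ℝ) ≤ (2:ℝ) ^ (2 ^ (k+1) : ℕ) := one_le_pow₀ one_le_two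
      have hEcast : ((2 ^ 2 ^ (k+1) : ℕ) : ℝ) = (2:ℝ) ^ (2 ^ (k+1) : ℕ) := by
        push_cast; ring
      -- log (n+1) = h * log 2
      have hlog1 : Real.log (((2 ^ 2 ^ 2 ^ (k+1) - 1 : ℕ) : ℝ) + 1)
          = (2:ℝ) ^ (2 ^ (k+1) : ℕ) * Real.log 2 := by
        rw [hcast1, Real.log_pow, hEcast]
      -- log (n+2) ≤ 2 * h
      have hlog2 : Real.log (((2 ^ 2 ^ 2 ^ (k+1) - 1 : ℕ) : ℝ) + 2)
          ≤ 2 * (2:ℝ) ^ (2 ^ (k+1) : ℕ) := by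
        have hle : ((2 ^ 2 ^ 2 ^ (k+1) - 1 : ℕ) : ℝ) + 2
            ≤ (2:ℝ) ^ (2 ^ 2 ^ (k+1) + 1 : ℕ) := by
          have hps : (2:ℝ) ^ (2 ^ 2 ^ (k+1) + 1 : ℕ)
              = (2:ℝ) ^ (2 ^ 2 ^ (k+1) : ℕ) * 2 := pow_succ _ _
          have h1le : (1:ℝ) ≤ (2:ℝ) ^ (2 ^ 2 ^ (k+1) : ℕ) := one_le_pow₀ one_le_two
          have := hcast1
          rw [hps]
          linarith
        calc Real.log (((2 ^ 2 ^ 2 ^ (k+1) - 1 : ℕ) : ℝ) + 2)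
            ≤ Real.log ((2:ℝ) ^ (2 ^ 2 ^ (k+1) + 1 : ℕ)) := by
              apply Real.log_le_log (by positivity) hle
          _ = ((2 ^ 2 ^ (k+1) + 1 : ℕ) : ℝ) * Real.log 2 := by rw [Real.log_pow]
          _ ≤ ((2 ^ 2 ^ (k+1) + 1 : ℕ) : ℝ) := by
              nlinarith [log_two_le_one, Real.log_nonneg (by norm_num : (1:ℝ) ≤ 2),
                (by positivity : (0:ℝ) ≤ ((2 ^ 2 ^ (k+1) + 1 : ℕ) : ℝ))]
          _ ≤ 2 * (2:ℝ) ^ (2 ^ (k+1) : ℕ) := by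
              push_cast
              nlinarith [hh1]
      -- aa n ≤ 5 * h
      have haale : aa (2 ^ 2 ^ 2 ^ (k+1) - 1) ≤ 5 * (2:ℝ) ^ (2 ^ (k+1) : ℕ) := by
        unfold aa
        rw [Kf_B k]
        nlinarith [hlog2, hh1]
      have haapos : (0:ℝ) < aa (2 ^ 2 ^ 2 ^ (k+1) - 1) := by
        linarith [aa_gt_one (2 ^ 2 ^ 2 ^ (k+1) - 1)]
      show (1/10 : ℝ) ≤ Real.log (((2 ^ 2 ^ 2 ^ (k+1) - 1 : ℕ) : ℝ) + 1)
          / aa (2 ^ 2 ^ 2 ^ (k+1) - 1)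
      rw [le_div_iff₀ haapos, hlog1]
      nlinarith [Real.log_two_gt_d9, hh1, haale, haapos]
    obtain ⟨n, h1, h2⟩ := (hfreq.and_eventually hev).exists
    linarith

end
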